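/- Let k be a field, A and B Noetherian k-algebras with R = A ⊗_k B Noetherian. Let I, K ⊆ A and J ⊆ B be ideals. Then in R, (IR + JR) ∩ (KR + JR) = (I ∩ K)R + JR. -/

import Mathlib

open TensorProduct Ideal

/-- Extension of an ideal of `A` to `A ⊗[k] B`. -/
noncomputable def extL (k : Type*) {A : Type*} (B : Type*) [Field k] [CommRing A] [CommRing B]
    [Algebra k A] [Algebra k B] (I : Ideal A) : Ideal (A ⊗[k] B) :=
  I.map (Algebra.TensorProduct.includeLeft : A →ₐ[k] A ⊗[k] B)

/-- Extension of an ideal of `B` to `A ⊗[k] B`. -/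
noncomputable def extR (k A : Type*) {B : Type*} [Field k] [CommRing A] [CommRing B]
    [Algebra k A] [Algebra k B] (J : Ideal B) : Ideal (A ⊗[k] B) :=
  J.map (Algebra.TensorProduct.includeRight : B →ₐ[k] A ⊗[k] B)

section Aux

variable {k A C ι : Type*} [Field k] [CommRing A] [CommRing C] [Algebra k A] [Algebra k C]
  [DecidableEq ι]

/-- Membership in the extension of `I` characterized by coordinates w.r.t. a basis of `C`. -/
lemma mem_extL_iff (b : Module.Basis ι k C) (I : Ideal A) (x : A ⊗[k] C) :
    x ∈ extL k C I ↔ ∀ i,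
      ((TensorProduct.congr (LinearEquiv.refl k A) b.repr ≪≫ₗ
        TensorProduct.finsuppScalarRight k k A ι) x) i ∈ I := by
  set E := TensorProduct.congr (LinearEquiv.refl k A) b.repr ≪≫ₗ
    TensorProduct.finsuppScalarRight k k A ι with hE
  constructor
  · intro hx i
    have hx' : x ∈ (extL k C I).restrictScalars k := hx
    rw [extL, Ideal.map_includeLeft_eq] at hx'
    obtain ⟨y, rfl⟩ := hx'
    clear hx
    induction y with
    | zero => simpa using I.zero_mem
    | tmul a c =>
      have h1 : E ((a : A) ⊗ₜ[k] c) i = b.repr c i • (a : A) := by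
        simp [hE, TensorProduct.finsuppScalarRight_apply_tmul_apply]
      simpa [h1] using Submodule.smul_mem (I.restrictScalars k) (b.repr c i) a.2
    | add y z hy hz =>
      rw [map_add, map_add]
      exact I.add_mem hy hz
  · intro h
    have key : ∀ f : ι →₀ A, (∀ i, f i ∈ I) → E.symm f ∈ extL k C I := by
      intro f
      induction f using Finsupp.induction with
      | zero => intro _; simpa using (extL k C I).zero_mem
      | single_add i a f hif ha ihf =>
        intro hmem
        rw [map_add]
        refine (extL k C I).add_mem ?_ (ihf fun j => ?_)
        · have hsingle : E.symm (Finsupp.single i a) = a ⊗ₜ[k] (b i) := by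
            simp [hE, TensorProduct.finsuppScalarRight_symm_apply_single,
              TensorProduct.congr_symm_tmul, Module.Basis.repr_symm_single_one]
          have hai : a ∈ I := by
            have := hmem i
            simpa [Finsupp.notMem_support_iff.mp hif] using this
          rw [hsingle]
          have h2 : a ⊗ₜ[k] (b i) = ((1 : A) ⊗ₜ[k] (b i)) * (a ⊗ₜ[k] (1 : C)) := by
            simp [Algebra.TensorProduct.tmul_mul_tmul]
          rw [h2]
          exact Ideal.mul_mem_left _ _ (Ideal.mem_map_of_mem _ hai)
        · rcases eq_or_ne j i with rfl | hji
          · simpa [Finsupp.notMem_support_iff.mp hif] using I.zero_mem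
          · have := hmem j
            simpa [Finsupp.single_eq_of_ne' (Ne.symm hji)] using this
    have := key (E x) fun i => h i
    simpa using this

lemma extL_inf (I K : Ideal A) : extL k C I ⊓ extL k C K = extL k C (I ⊓ K) := by
  classical
  obtain ⟨⟨s, b⟩⟩ : Nonempty (Σ s : Set C, Module.Basis s k C) := ⟨⟨_, Module.Basis.ofVectorSpace k C⟩⟩
  ext x
  simp only [Submodule.mem_inf, mem_extL_iff b, Ideal.mem_inf]
  exact ⟨fun ⟨h1, h2⟩ i => ⟨h1 i, h2 i⟩, fun h => ⟨fun i => (h i).1, fun i => (h i).2⟩⟩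

end Aux

/-- `(I+J) ∩ (K+J) = (I ∩ K) + J` for ideals `I, K ⊆ A` and `J ⊆ B`, extended to
`R = A ⊗[k] B`. -/
theorem inf_sum_eq {k A B : Type*} [Field k] [CommRing A] [CommRing B]
    [Algebra k A] [Algebra k B] [IsNoetherianRing A] [IsNoetherianRing B]
    [IsNoetherianRing (A ⊗[k] B)] (I K : Ideal A) (J : Ideal B) :
    (extL k B I + extR k A J) ⊓ (extL k B K + extR k A J) =
      extL k B (I ⊓ K) + extR k A J := by
  classical
  set C := B ⧸ J
  set f : A ⊗[k] B →ₐ[k] A ⊗[k] C :=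
    Algebra.TensorProduct.map (AlgHom.id k A) (Ideal.Quotient.mkₐ k J) with hf
  have hsurj : Function.Surjective f := by
    have : Function.Surjective (Ideal.Quotient.mkₐ k J) := Ideal.Quotient.mk_surjective
    exact LinearMap.lTensor_surjective A this
  have hker : RingHom.ker f = extR k A J := by
    rw [hf, Algebra.TensorProduct.lTensor_ker _ (Ideal.Quotient.mk_surjective), extR]
    congr 1
    exact Ideal.Quotient.mkₐ_ker k J
  have hcompL : f.comp (Algebra.TensorProduct.includeLeft : A →ₐ[k] A ⊗[k] B) =
      (Algebra.TensorProduct.includeLeft : A →ₐ[k] A ⊗[k] C) := by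
    rw [hf, Algebra.TensorProduct.map_comp_includeLeft, AlgHom.comp_id]
  have hmapL : ∀ L : Ideal A, Ideal.map f (extL k B L) = extL k C L := by
    intro L
    rw [extL, extL]
    have h1 : Ideal.map f (Ideal.map
        (Algebra.TensorProduct.includeLeft : A →ₐ[k] A ⊗[k] B) L) =
        Ideal.map (f.toRingHom.comp
          (Algebra.TensorProduct.includeLeft : A →ₐ[k] A ⊗[k] B).toRingHom) L :=
      Ideal.map_map _ _
    have h2 : f.toRingHom.comp
        (Algebra.TensorProduct.includeLeft : A →ₐ[k] A ⊗[k] B).toRingHom =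
        (Algebra.TensorProduct.includeLeft : A →ₐ[k] A ⊗[k] C).toRingHom := by
      exact congrArg AlgHom.toRingHom hcompL
    rw [h1, h2]
    rfl
  have hcomap : ∀ L : Ideal A,
      Ideal.comap f (extL k C L) = extL k B L + extR k A J := by
    intro L
    rw [← hmapL, Ideal.comap_map_of_surjective f hsurj, ← RingHom.ker_eq_comap_bot, hker,
      Ideal.add_eq_sup]
  rw [← hcomap, ← hcomap, ← hcomap, ← Ideal.comap_inf, extL_inf]
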